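/- (Trivial limit along non-resonant lines.) Let c ∈ ℝ be such that c ≠ k_i + k_{M+i} for every i = 1, …, N−M. Then there is a unique M-element subset S* of {1,…,N} minimizing S ↦ Σ_{j∈S} η_j(c) over M-element subsets, where η_j(c) = k_j(k_j − c); and for every ξ ∈ ℝ, w_1(c·y + ξ, y) → Σ_{j∈S*} k_j as y → −∞ (a constant independent of ξ, so the solution u = −2 ∂w_1/∂x vanishes asymptotically in these directions). -/

import Mathlib

/-- trivial limit along non-resonant lines: if c ≠ k_i + k_{M+i}
for every i = 1,…,N−M, then there is a unique M-element subset S* of {1,…,N}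
minimizing S ↦ Σ_{j∈S} η_j(c) (η_j(c) = k_j(k_j − c)), and for every ξ,
w₁(c y + ξ, y) → Σ_{j∈S*} k_j as y → −∞ (a constant independent of ξ). -/

lemma exists_strict_min (N M : ℕ) (hM1 : 1 ≤ M) (hMN : M + 1 ≤ N)
    (k : ℕ → ℝ) (hk : ∀ a b, 1 ≤ a → a < b → b ≤ N → k a < k b)
    (c : ℝ) (hc : ∀ i, 1 ≤ i → i + M ≤ N → c ≠ k i + k (M + i)) :
    ∃ S ∈ Finset.powersetCard M (Finset.Icc 1 N),
      ∀ T ∈ Finset.powersetCard M (Finset.Icc 1 N), T ≠ S →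
        (∑ j ∈ S, k j * (k j - c)) < ∑ j ∈ T, k j * (k j - c) := by
  set η : ℕ → ℝ := fun j => k j * (k j - c) with hηdef
  set f : Finset ℕ → ℝ := fun S => ∑ j ∈ S, η j with hfdef
  set 𝒮 := Finset.powersetCard M (Finset.Icc 1 N) with h𝒮
  have hkle : ∀ a b, 1 ≤ a → a ≤ b → b ≤ N → k a ≤ k b := by
    intro a b h1 h2 h3
    rcases eq_or_lt_of_le h2 with h | h
    · rw [h]
    · exact (hk a b h1 h h3).le
  have hcard : (Finset.Icc 1 N).card = N := by rw [Nat.card_Icc]; omega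
  have hne : 𝒮.Nonempty := Finset.powersetCard_nonempty.mpr (by rw [hcard]; omega)
  obtain ⟨S, hS, hmin⟩ := Finset.exists_min_image 𝒮 f hne
  -- swap lemma
  have swap : ∀ T ∈ 𝒮, ∀ a ∈ T, ∀ x, x ∉ T → 1 ≤ x → x ≤ N → η x < η a →
      ∃ T' ∈ 𝒮, f T' < f T := by
    intro T hT a ha x hx h1x hxN hlt
    obtain ⟨hTs, hTc⟩ := Finset.mem_powersetCard.1 hT
    refine ⟨insert x (T.erase a), ?_, ?_⟩
    · rw [Finset.mem_powersetCard]
      constructor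
      · exact Finset.insert_subset (Finset.mem_Icc.2 ⟨h1x, hxN⟩)
          ((Finset.erase_subset _ _).trans hTs)
      · rw [Finset.card_insert_of_notMem (fun h => hx (Finset.mem_of_mem_erase h)),
          Finset.card_erase_of_mem ha, hTc]
        omega
    · have h1 : f (insert x (T.erase a)) = η x + (f T - η a) := by
        show (∑ j ∈ insert x (T.erase a), η j) = η x + ((∑ j ∈ T, η j) - η a)
        rw [Finset.sum_insert (fun h => hx (Finset.mem_of_mem_erase h))]
        rw [Finset.sum_erase_eq_sub ha]
      rw [h1]; linarith
  -- contiguity of minimizers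
  have contig : ∀ T ∈ 𝒮, (∀ T' ∈ 𝒮, f T ≤ f T') →
      ∀ a ∈ T, ∀ b ∈ T, ∀ x, a ≤ x → x ≤ b → x ∈ T := by
    intro T hT hTmin a ha b hb x hax hxb
    by_contra hx
    obtain ⟨hTs, hTc⟩ := Finset.mem_powersetCard.1 hT
    have hax' : a < x := lt_of_le_of_ne hax (fun h => hx (h ▸ ha))
    have hxb' : x < b := lt_of_le_of_ne hxb (fun h => hx (h ▸ hb))
    have h1a : 1 ≤ a := (Finset.mem_Icc.1 (hTs ha)).1
    have hbN : b ≤ N := (Finset.mem_Icc.1 (hTs hb)).2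
    have h1x : 1 ≤ x := le_trans h1a hax
    have hxN : x ≤ N := le_trans hxb hbN
    have hkax : k a < k x := hk a x h1a hax' hxN
    have hkxb : k x < k b := hk x b h1x hxb' hbN
    have key : η x < η a ∨ η x < η b := by
      by_contra h
      push_neg at h
      obtain ⟨h1, h2⟩ := h
      -- η x - η a = (k x - k a)(k x + k a - c) ≥ 0, k x - k a > 0 ⇒ k x + k a ≥ c
      have e1 : 0 ≤ (k x - k a) * (k x + k a - c) := by
        have : η x - η a = (k x - k a) * (k x + k a - c) := by rw [hηdef]; ring
        linarith [this ▸ sub_nonneg.2 h1]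
      have e2 : 0 ≤ (k x - k b) * (k x + k b - c) := by
        have : η x - η b = (k x - k b) * (k x + k b - c) := by rw [hηdef]; ring
        linarith [this ▸ sub_nonneg.2 h2]
      have p1 : 0 ≤ k x + k a - c := by
        by_contra hp; push_neg at hp; nlinarith
      have p2 : k x + k b - c ≤ 0 := by
        by_contra hp; push_neg at hp; nlinarith
      linarith
    rcases key with h | h
    · obtain ⟨T', hT', hlt⟩ := swap T hT a ha x hx h1x hxN h
      exact absurd (hTmin T' hT') (not_le.2 hlt)
    · obtain ⟨T', hT', hlt⟩ := swap T hT b hb x hx h1x hxN h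
      exact absurd (hTmin T' hT') (not_le.2 hlt)
  -- minimizers are intervals
  have interval : ∀ T ∈ 𝒮, (∀ T' ∈ 𝒮, f T ≤ f T') →
      ∃ i, 1 ≤ i ∧ i + (M - 1) ≤ N ∧ T = Finset.Icc i (i + (M - 1)) := by
    intro T hT hTmin
    obtain ⟨hTs, hTc⟩ := Finset.mem_powersetCard.1 hT
    have hTne : T.Nonempty := Finset.card_pos.1 (by omega)
    set i := T.min' hTne with hi
    set m := T.max' hTne with hm
    have him : i ≤ m := T.min'_le m (T.max'_mem hTne)
    have hTeq : T = Finset.Icc i m := by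
      ext x
      simp only [Finset.mem_Icc]
      constructor
      · intro hx; exact ⟨T.min'_le x hx, T.le_max' x hx⟩
      · intro ⟨h1, h2⟩
        exact contig T hT hTmin i (T.min'_mem hTne) m (T.max'_mem hTne) x h1 h2
    have hcardIcc : m + 1 - i = M := by
      rw [hTeq] at hTc; rw [Nat.card_Icc] at hTc; exact hTc
    have h1i : 1 ≤ i := (Finset.mem_Icc.1 (hTs (T.min'_mem hTne))).1
    have hmN : m ≤ N := (Finset.mem_Icc.1 (hTs (T.max'_mem hTne))).2
    refine ⟨i, h1i, by omega, ?_⟩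
    rw [hTeq]
    congr 1
    omega
  set m' := M - 1 with hm'
  have hMm' : M = m' + 1 := by omega
  -- block membership
  have hblock : ∀ i, 1 ≤ i → i + m' ≤ N → Finset.Icc i (i + m') ∈ 𝒮 := by
    intro i h1 h2
    rw [h𝒮, Finset.mem_powersetCard]
    constructor
    · intro x hx
      simp only [Finset.mem_Icc] at hx ⊢
      omega
    · rw [Nat.card_Icc]; omega
  -- step formula
  have step : ∀ l, f (Finset.Icc (l+1) (l+m'+1)) = f (Finset.Icc l (l+m')) + (η (l+m'+1) - η l) := by
    intro l
    have h1 : Finset.Icc l (l+m'+1) = insert l (Finset.Icc (l+1) (l+m'+1)) := by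
      ext t; simp only [Finset.mem_Icc, Finset.mem_insert]; omega
    have h2 : Finset.Icc l (l+m'+1) = insert (l+m'+1) (Finset.Icc l (l+m')) := by
      ext t; simp only [Finset.mem_Icc, Finset.mem_insert]; omega
    have hn1 : l ∉ Finset.Icc (l+1) (l+m'+1) := by simp [Finset.mem_Icc]
    have hn2 : l+m'+1 ∉ Finset.Icc l (l+m') := by simp [Finset.mem_Icc]
    have h3 := congrArg f (h1.symm.trans h2)
    rw [hfdef] at h3
    simp only [Finset.sum_insert hn1, Finset.sum_insert hn2] at h3
    rw [hfdef]
    linarith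
  -- blocks comparison
  have blocks : ∀ i j, 1 ≤ i → i < j → j + m' ≤ N →
      (∀ T' ∈ 𝒮, f (Finset.Icc i (i+m')) ≤ f T') →
      f (Finset.Icc i (i+m')) < f (Finset.Icc j (j+m')) := by
    intro i j h1i hij hjN hbmin
    -- g i > 0
    have hgi : 0 < k (i+m'+1) + k i - c := by
      have hmem : Finset.Icc (i+1) (i+1+m') ∈ 𝒮 := hblock (i+1) (by omega) (by omega)
      have hle := hbmin _ hmem
      have heq : (i+1) + m' = i + m' + 1 := by omega
      rw [show Finset.Icc (i+1) (i+1+m') = Finset.Icc (i+1) (i+m'+1) by rw [show i+1+m' = i+m'+1 by omega]] at hle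
      rw [step i] at hle
      have hηge : η i ≤ η (i+m'+1) := by linarith
      have hkpos : k i < k (i+m'+1) := hk i (i+m'+1) h1i (by omega) (by omega)
      have hfac : 0 ≤ (k (i+m'+1) - k i) * (k (i+m'+1) + k i - c) := by
        have : η (i+m'+1) - η i = (k (i+m'+1) - k i) * (k (i+m'+1) + k i - c) := by
          rw [hηdef]; ring
        linarith [this ▸ sub_nonneg.2 hηge]
      have hnz : c ≠ k i + k (M + i) := hc i h1i (by omega)
      rw [show M + i = i + m' + 1 by omega] at hnz
      have p : 0 ≤ k (i+m'+1) + k i - c := by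
        by_contra hp; push_neg at hp; nlinarith
      rcases lt_or_eq_of_le p with h | h
      · exact h
      · exact absurd (by linarith : c = k i + k (i+m'+1)) hnz
    -- induction on j
    have main : ∀ j, i + 1 ≤ j → j + m' ≤ N → f (Finset.Icc i (i+m')) < f (Finset.Icc j (j+m')) := by
      intro j hj
      induction j, hj using Nat.le_induction with
      | base =>
        intro hN'
        rw [show i+1+m' = i+m'+1 by omega, step i]
        have : 0 < η (i+m'+1) - η i := by
          have heq : η (i+m'+1) - η i = (k (i+m'+1) - k i) * (k (i+m'+1) + k i - c) := by
            rw [hηdef]; ring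
          rw [heq]
          exact mul_pos (by linarith [hk i (i+m'+1) h1i (by omega) (by omega)]) hgi
        linarith
      | succ l hl ih =>
        intro hN'
        have ihv := ih (by omega)
        rw [show l+1+m' = l+m'+1 by omega, step l]
        have hgl : 0 < k (l+m'+1) + k l - c := by
          have e1 : k i ≤ k l := hkle i l h1i (by omega) (by omega)
          have e2 : k (i+m'+1) ≤ k (l+m'+1) := hkle (i+m'+1) (l+m'+1) (by omega) (by omega) (by omega)
          linarith
        have : 0 < η (l+m'+1) - η l := by
          have heq : η (l+m'+1) - η l = (k (l+m'+1) - k l) * (k (l+m'+1) + k l - c) := by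
            rw [hηdef]; ring
          rw [heq]
          exact mul_pos (by linarith [hk l (l+m'+1) (by omega) (by omega) (by omega)]) hgl
        linarith
    exact main j hij hjN
  refine ⟨S, hS, ?_⟩
  intro T hT hTS
  by_contra hcon
  push_neg at hcon
  have hTmin : ∀ T' ∈ 𝒮, f T ≤ f T' := fun T' hT' => le_trans hcon (hmin T' hT')
  obtain ⟨i, h1i, hiN, hSeq⟩ := interval S hS hmin
  obtain ⟨j, h1j, hjN, hTeq⟩ := interval T hT hTmin
  have hij : i ≠ j := fun h => hTS (by rw [hSeq, hTeq, h])
  rcases lt_or_gt_of_ne hij with h | h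
  · have := blocks i j h1i h hjN (hSeq ▸ hmin)
    rw [← hSeq, ← hTeq] at this
    linarith [hTmin S hS]
  · have := blocks j i h1j h hiN (hTeq ▸ hTmin)
    rw [← hSeq, ← hTeq] at this
    linarith [hmin T hT]

open Filter

theorem w1_trivial_limit_nonresonant
    (N : ℕ) (hN : 2 ≤ N)
    (M : ℕ) (hM1 : 1 ≤ M) (hM2 : M ≤ N - 1)
    (k θ0 : ℕ → ℝ)
    (hk : ∀ a b, 1 ≤ a → a < b → b ≤ N → k a < k b)
    (θ : ℕ → ℝ → ℝ → ℝ)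
    (hθ : ∀ i x y, θ i x y = -(k i) * x + (k i) ^ 2 * y + θ0 i)
    (Δ : Finset ℕ → ℝ)
    (hΔ : ∀ S, Δ S = ∏ j ∈ S, ∏ l ∈ S.filter (fun l => j < l), (k j - k l) ^ 2)
    (τ : ℝ → ℝ → ℝ)
    (hτ : ∀ x y, τ x y = ∑ S ∈ Finset.powersetCard M (Finset.Icc 1 N),
        Δ S * Real.exp (∑ j ∈ S, θ j x y))
    (w1 : ℝ → ℝ → ℝ)
    (hw1 : ∀ x y, w1 x y = -(deriv (fun x' => τ x' y) x) / τ x y)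
    (η : ℕ → ℝ → ℝ)
    (hη : ∀ i c, η i c = k i * (k i - c))
    (c : ℝ) (hc : ∀ i, 1 ≤ i → i ≤ N - M → c ≠ k i + k (M + i)) :
    ∃ Sstar ∈ Finset.powersetCard M (Finset.Icc 1 N),
      (∀ S ∈ Finset.powersetCard M (Finset.Icc 1 N), S ≠ Sstar →
          (∑ j ∈ Sstar, η j c) < ∑ j ∈ S, η j c) ∧
      (∀ ξ : ℝ, Tendsto (fun y : ℝ => w1 (c * y + ξ) y) atBot
          (nhds (∑ j ∈ Sstar, k j))) := by
  obtain ⟨Sstar, hSstar, hstrict⟩ := exists_strict_min N M hM1 (by omega) k hk c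
    (fun i h1 h2 => hc i h1 (by omega))
  refine ⟨Sstar, hSstar, ?_, ?_⟩
  · intro S hS hne
    simp only [hη]
    exact hstrict S hS hne
  intro ξ
  set 𝒮 := Finset.powersetCard M (Finset.Icc 1 N) with h𝒮
  set K : Finset ℕ → ℝ := fun S => ∑ j ∈ S, k j with hK
  set E : Finset ℕ → ℝ := fun S => ∑ j ∈ S, k j * (k j - c) with hE
  set B : Finset ℕ → ℝ := fun S => ∑ j ∈ S, (θ0 j - k j * ξ) with hB
  -- Δ Sstar positive
  have hΔpos : 0 < Δ Sstar := by
    rw [hΔ]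
    apply Finset.prod_pos
    intro j hj
    apply Finset.prod_pos
    intro l hl
    have hls := Finset.mem_filter.1 hl
    have hjI := Finset.mem_Icc.1 ((Finset.mem_powersetCard.1 hSstar).1 hj)
    have hlI := Finset.mem_Icc.1 ((Finset.mem_powersetCard.1 hSstar).1 hls.1)
    have : k j < k l := hk j l hjI.1 hls.2 hlI.2
    nlinarith
  -- exponent split
  have hsplit : ∀ (S : Finset ℕ) (x y : ℝ),
      (∑ j ∈ S, θ j x y) = -(K S) * x + (∑ j ∈ S, (k j ^ 2 * y + θ0 j)) := by
    intro S x y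
    have h1 : ∀ j ∈ S, θ j x y = (-(k j)) * x + (k j ^ 2 * y + θ0 j) := by
      intro j _; rw [hθ]; ring
    rw [Finset.sum_congr rfl h1, Finset.sum_add_distrib, ← Finset.sum_mul, hK]
    rw [← Finset.sum_neg_distrib]
  -- derivative of τ in x
  have hderiv : ∀ x y : ℝ, deriv (fun x' => τ x' y) x
      = ∑ S ∈ 𝒮, Δ S * (Real.exp (∑ j ∈ S, θ j x y) * (-(K S))) := by
    intro x y
    have hfun : (fun x' => τ x' y)
        = fun x' => ∑ S ∈ 𝒮, Δ S * Real.exp (-(K S) * x' + (∑ j ∈ S, (k j ^ 2 * y + θ0 j))) := by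
      funext x'
      rw [hτ]
      exact Finset.sum_congr rfl fun S _ => by rw [hsplit S x' y]
    rw [hfun]
    have hhas : HasDerivAt (fun x' => ∑ S ∈ 𝒮, Δ S * Real.exp (-(K S) * x' + (∑ j ∈ S, (k j ^ 2 * y + θ0 j))))
        (∑ S ∈ 𝒮, Δ S * (Real.exp (-(K S) * x + (∑ j ∈ S, (k j ^ 2 * y + θ0 j))) * (-(K S)))) x := by
      apply HasDerivAt.fun_sum
      intro S _
      have h1 : HasDerivAt (fun x' : ℝ => -(K S) * x' + (∑ j ∈ S, (k j ^ 2 * y + θ0 j))) (-(K S)) x := by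
        simpa using ((hasDerivAt_id x).const_mul (-(K S))).add_const (∑ j ∈ S, (k j ^ 2 * y + θ0 j))
      exact (h1.exp).const_mul (Δ S)
    rw [hhas.deriv]
    exact Finset.sum_congr rfl fun S _ => by rw [← hsplit S x y]
  -- along the line
  have hline : ∀ (S : Finset ℕ) (y : ℝ),
      (∑ j ∈ S, θ j (c * y + ξ) y) = E S * y + B S := by
    intro S y
    have h1 : ∀ j ∈ S, θ j (c * y + ξ) y = (k j * (k j - c)) * y + (θ0 j - k j * ξ) := by
      intro j _; rw [hθ]; ring
    rw [Finset.sum_congr rfl h1, Finset.sum_add_distrib, ← Finset.sum_mul, hE, hB]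
  -- w1 along the line
  have hw2 : ∀ y : ℝ, w1 (c * y + ξ) y
      = (∑ S ∈ 𝒮, Δ S * K S * Real.exp ((E S - E Sstar) * y + (B S - B Sstar)))
        / (∑ S ∈ 𝒮, Δ S * Real.exp ((E S - E Sstar) * y + (B S - B Sstar))) := by
    intro y
    rw [hw1, hderiv, hτ]
    have hnum : -(∑ S ∈ 𝒮, Δ S * (Real.exp (∑ j ∈ S, θ j (c * y + ξ) y) * (-(K S))))
        = Real.exp (E Sstar * y + B Sstar) *
          (∑ S ∈ 𝒮, Δ S * K S * Real.exp ((E S - E Sstar) * y + (B S - B Sstar))) := by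
      rw [Finset.mul_sum, ← Finset.sum_neg_distrib]
      refine Finset.sum_congr rfl fun S _ => ?_
      rw [hline, show (E S * y + B S) = (E Sstar * y + B Sstar) + ((E S - E Sstar) * y + (B S - B Sstar)) by ring, Real.exp_add]
      ring
    have hden : (∑ S ∈ 𝒮, Δ S * Real.exp (∑ j ∈ S, θ j (c * y + ξ) y))
        = Real.exp (E Sstar * y + B Sstar) *
          (∑ S ∈ 𝒮, Δ S * Real.exp ((E S - E Sstar) * y + (B S - B Sstar))) := by
      rw [Finset.mul_sum]
      refine Finset.sum_congr rfl fun S _ => ?_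
      rw [hline, show (E S * y + B S) = (E Sstar * y + B Sstar) + ((E S - E Sstar) * y + (B S - B Sstar)) by ring, Real.exp_add]
      ring
    rw [hnum, hden, mul_div_mul_left _ _ (Real.exp_ne_zero _)]
  -- limits
  have hnumlim : Tendsto (fun y => ∑ S ∈ 𝒮, Δ S * K S * Real.exp ((E S - E Sstar) * y + (B S - B Sstar)))
      atBot (nhds (Δ Sstar * K Sstar)) := by
    have : Δ Sstar * K Sstar = ∑ S ∈ 𝒮, (if S = Sstar then Δ Sstar * K Sstar else 0) := by
      rw [Finset.sum_ite_eq' 𝒮 Sstar (fun _ => Δ Sstar * K Sstar), if_pos hSstar]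
    rw [this]
    apply tendsto_finset_sum
    intro S hS
    by_cases h : S = Sstar
    · subst h
      simp only [sub_self, zero_mul, add_zero, Real.exp_zero, mul_one, if_pos]
      exact tendsto_const_nhds
    · rw [if_neg h]
      have hd : 0 < E S - E Sstar := sub_pos.2 (hstrict S hS h)
      have h1 : Tendsto (fun y : ℝ => (E S - E Sstar) * y + (B S - B Sstar)) atBot atBot := by
        apply tendsto_atBot_add_const_right
        exact (tendsto_const_mul_atBot_of_pos hd).2 tendsto_id
      have h2 : Tendsto (fun y : ℝ => Real.exp ((E S - E Sstar) * y + (B S - B Sstar))) atBot (nhds 0) :=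
        Real.tendsto_exp_atBot.comp h1
      have h3 := h2.const_mul (Δ S * K S)
      simpa using h3
  have hdenlim : Tendsto (fun y => ∑ S ∈ 𝒮, Δ S * Real.exp ((E S - E Sstar) * y + (B S - B Sstar)))
      atBot (nhds (Δ Sstar)) := by
    have : Δ Sstar = ∑ S ∈ 𝒮, (if S = Sstar then Δ Sstar else 0) := by
      rw [Finset.sum_ite_eq' 𝒮 Sstar (fun _ => Δ Sstar), if_pos hSstar]
    rw [this]
    apply tendsto_finset_sum
    intro S hS
    by_cases h : S = Sstar
    · subst h
      simp only [sub_self, zero_mul, add_zero, Real.exp_zero, mul_one, if_pos]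
      exact tendsto_const_nhds
    · rw [if_neg h]
      have hd : 0 < E S - E Sstar := sub_pos.2 (hstrict S hS h)
      have h1 : Tendsto (fun y : ℝ => (E S - E Sstar) * y + (B S - B Sstar)) atBot atBot := by
        apply tendsto_atBot_add_const_right
        exact (tendsto_const_mul_atBot_of_pos hd).2 tendsto_id
      have h2 : Tendsto (fun y : ℝ => Real.exp ((E S - E Sstar) * y + (B S - B Sstar))) atBot (nhds 0) :=
        Real.tendsto_exp_atBot.comp h1
      have h3 := h2.const_mul (Δ S)
      simpa using h3
  have hfinal := hnumlim.div hdenlim (ne_of_gt hΔpos)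
  rw [mul_div_cancel_left₀ (K Sstar) (ne_of_gt hΔpos)] at hfinal
  exact hfinal.congr (fun y => (hw2 y).symm)
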